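/- For all Z > 0, R > 0, ε ∈ (0,1) and 0 < k_min ≤ k_max there exist λ₁ ≥ 1 and C₁ > 0, depending only on R, Z, k_min, k_max and ε, with the following property (global strong convexity of J_λ). Let λ ≥ λ₁, let k ∈ [k_min, k_max], and let q₁, r₁, q₂, r₂ : [0,Z] → ℝ be twice continuously differentiable functions whose values, first derivatives and second derivatives are bounded in absolute value by R on [0,Z]. Set h₁ = q₂ − q₁ and h₂ = r₂ − r₁, and assume h₁(0) = h₁'(0) = h₂(0) = h₂'(0) = 0. Then J_λ(q₂,r₂) − J_λ(q₁,r₁) − 2 ∫₀^Z [L₁(q₁,r₁)(z)·L₁,lin(h₁,h₂)(z) + L₂(q₁,r₁)(z)·L₂,lin(h₁,h₂)(z)] e^{−2λz} dz ≥ C₁ e^{−2λZ} ∫₀^Z (h₁(z)² + h₁'(z)² + h₁''(z)² + h₂(z)² + h₂'(z)² + h₂''(z)²) dz. -/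

import Mathlib

/-- The nonlinear operator `L₁(q,r)` of equation (3.200). -/
noncomputable def L1 (ε k : ℝ) (q r : ℝ → ℝ) (z : ℝ) : ℝ :=
  deriv (deriv q) z + (2 * k / ε) * deriv q z * (deriv q z - deriv r z)
    + (1 / ε ^ 2) * (deriv q z - deriv r z) ^ 2
    - 2 * Real.sqrt k * deriv q z
    - (deriv q z - deriv r z) / (ε * Real.sqrt k)

/-- The nonlinear operator `L₂(q,r)` of equation (3.21). -/
noncomputable def L2 (ε k : ℝ) (q r : ℝ → ℝ) (z : ℝ) : ℝ :=
  deriv (deriv r) z + (2 * k / ε) * deriv q z * (deriv q z - deriv r z)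
    + (1 / ε ^ 2) * (deriv q z - deriv r z) ^ 2
    - 2 * Real.sqrt k * deriv q z
    - (deriv q z - deriv r z) / (ε * Real.sqrt k)

/-- The linearization of `L₁` at the base point `(q,r)`, applied to `(h₁,h₂)`. -/
noncomputable def L1lin (ε k : ℝ) (q r h₁ h₂ : ℝ → ℝ) (z : ℝ) : ℝ :=
  deriv (deriv h₁) z
    + (2 * k / ε) * deriv h₁ z * (deriv q z - deriv r z)
    + (2 * k / ε) * deriv q z * (deriv h₁ z - deriv h₂ z)
    + (2 / ε ^ 2) * (deriv q z - deriv r z) * (deriv h₁ z - deriv h₂ z)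
    - 2 * Real.sqrt k * deriv h₁ z
    - (deriv h₁ z - deriv h₂ z) / (ε * Real.sqrt k)

/-- The linearization of `L₂` at the base point `(q,r)`, applied to `(h₁,h₂)`. -/
noncomputable def L2lin (ε k : ℝ) (q r h₁ h₂ : ℝ → ℝ) (z : ℝ) : ℝ :=
  deriv (deriv h₂) z
    + (2 * k / ε) * deriv h₁ z * (deriv q z - deriv r z)
    + (2 * k / ε) * deriv q z * (deriv h₁ z - deriv h₂ z)
    + (2 / ε ^ 2) * (deriv q z - deriv r z) * (deriv h₁ z - deriv h₂ z)
    - 2 * Real.sqrt k * deriv h₁ z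
    - (deriv h₁ z - deriv h₂ z) / (ε * Real.sqrt k)

/-- The weighted Tikhonov-like functional `J_λ(q,r)` of (4.4) with the Carleman weight
`exp (-2 λ z)`. -/
noncomputable def Jfun (ε k lam Z : ℝ) (q r : ℝ → ℝ) : ℝ :=
  ∫ z in (0:ℝ)..Z, ((L1 ε k q r z) ^ 2 + (L2 ε k q r z) ^ 2) * Real.exp (-2 * lam * z)

set_option linter.unusedTactic false
set_option linter.unreachableTactic false
set_option maxHeartbeats 1000000


lemma abs_sub' (a b : ℝ) : |a - b| ≤ |a| + |b| := by
  calc |a - b| = |a + -b| := by ring_nf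
  _ ≤ |a| + |-b| := abs_add_le _ _
  _ = |a| + |b| := by rw [abs_neg]

lemma weighted_poincare (Z lam : ℝ) (hZ : 0 ≤ Z) (hlam : 1 ≤ lam)
    (f : ℝ → ℝ) (hf : Differentiable ℝ f) (hf' : Continuous (deriv f)) (h0 : f 0 = 0) :
    ∫ z in (0:ℝ)..Z, (f z)^2 * Real.exp (-2*lam*z)
      ≤ (1/lam^2) * ∫ z in (0:ℝ)..Z, (deriv f z)^2 * Real.exp (-2*lam*z) := by
  have hl0 : (0:ℝ) < lam := lt_of_lt_of_le one_pos hlam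
  have hfc : Continuous f := hf.continuous
  have he : Continuous fun z : ℝ => Real.exp (-2*lam*z) := by fun_prop
  have hi1 : IntervalIntegrable (fun z => (f z)^2 * Real.exp (-2*lam*z)) MeasureTheory.volume 0 Z :=
    (by fun_prop : Continuous fun z => (f z)^2 * Real.exp (-2*lam*z)).intervalIntegrable _ _
  have hi2 : IntervalIntegrable (fun z => (deriv f z)^2 * Real.exp (-2*lam*z)) MeasureTheory.volume 0 Z :=
    (by fun_prop : Continuous fun z => (deriv f z)^2 * Real.exp (-2*lam*z)).intervalIntegrable _ _
  have hi3 : IntervalIntegrable (fun z => 2 * f z * deriv f z * Real.exp (-2*lam*z)) MeasureTheory.volume 0 Z :=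
    (by fun_prop : Continuous fun z => 2 * f z * deriv f z * Real.exp (-2*lam*z)).intervalIntegrable _ _
  set I1 := ∫ z in (0:ℝ)..Z, (f z)^2 * Real.exp (-2*lam*z) with hI1
  set I2 := ∫ z in (0:ℝ)..Z, (deriv f z)^2 * Real.exp (-2*lam*z) with hI2
  set I3 := ∫ z in (0:ℝ)..Z, 2 * f z * deriv f z * Real.exp (-2*lam*z) with hI3
  have key : ∫ z in (0:ℝ)..Z,
      (2 * f z * deriv f z * Real.exp (-2*lam*z) - 2*lam*((f z)^2 * Real.exp (-2*lam*z)))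
      = (f Z)^2 * Real.exp (-2*lam*Z) - (f 0)^2 * Real.exp (-2*lam*0) := by
    apply intervalIntegral.integral_eq_sub_of_hasDerivAt
    · intro z hz
      have h1 : HasDerivAt (fun t => (f t)^2) (2 * f z * deriv f z) z := by
        have := ((hf z).hasDerivAt).fun_pow 2
        simpa [mul_comm, mul_assoc, mul_left_comm] using this
      have hlin : HasDerivAt (fun t : ℝ => -2*lam*t) (-2*lam) z := by
        simpa using (hasDerivAt_id z).const_mul (-2*lam)
      have h2 : HasDerivAt (fun t : ℝ => Real.exp (-2*lam*t))
          (Real.exp (-2*lam*z) * (-2*lam)) z := (Real.hasDerivAt_exp _).comp z hlin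
      have h3 := h1.fun_mul h2
      exact h3.congr_deriv (by ring)
    · apply Continuous.intervalIntegrable
      fun_prop
  have keynn : 0 ≤ I3 - 2*lam*I1 := by
    have hsplit : ∫ z in (0:ℝ)..Z,
        (2 * f z * deriv f z * Real.exp (-2*lam*z) - 2*lam*((f z)^2 * Real.exp (-2*lam*z)))
        = I3 - 2*lam*I1 := by
      rw [intervalIntegral.integral_sub hi3 (hi1.const_mul _),
        intervalIntegral.integral_const_mul]
    rw [← hsplit, key, h0]
    nlinarith [Real.exp_pos (-2*lam*Z), sq_nonneg (f Z)]
  have hptwise : ∀ z ∈ Set.Icc (0:ℝ) Z,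
      2 * f z * deriv f z * Real.exp (-2*lam*z)
      ≤ lam*((f z)^2 * Real.exp (-2*lam*z)) + (1/lam)*((deriv f z)^2 * Real.exp (-2*lam*z)) := by
    intro z _
    have hexp : 0 < Real.exp (-2*lam*z) := Real.exp_pos _
    have h2ab : 2 * f z * deriv f z ≤ lam * (f z)^2 + (1/lam) * (deriv f z)^2 := by
      have hs := sq_nonneg (lam * f z - deriv f z)
      have hinv : 0 < 1/lam := by positivity
      nlinarith [mul_nonneg (le_of_lt hinv) hs, mul_pos hl0 hinv,
        (by field_simp : lam * (1/lam) = 1)]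
    nlinarith [hexp]
  have hI3le : I3 ≤ lam*I1 + (1/lam)*I2 := by
    have := intervalIntegral.integral_mono_on hZ hi3
      (((hi1.const_mul lam)).add ((hi2.const_mul (1/lam)))) hptwise
    calc I3 ≤ ∫ z in (0:ℝ)..Z, (lam*((f z)^2 * Real.exp (-2*lam*z))
          + (1/lam)*((deriv f z)^2 * Real.exp (-2*lam*z))) := this
      _ = lam*I1 + (1/lam)*I2 := by
          rw [intervalIntegral.integral_add (hi1.const_mul _) (hi2.const_mul _),
            intervalIntegral.integral_const_mul, intervalIntegral.integral_const_mul]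
  have : lam * I1 ≤ (1/lam) * I2 := by linarith
  have h2 : lam * (lam * I1) ≤ lam * ((1/lam) * I2) := by
    exact mul_le_mul_of_nonneg_left this (le_of_lt hl0)
  have h3 : lam^2 * I1 ≤ I2 := by
    have : lam * ((1/lam)*I2) = I2 := by field_simp
    nlinarith [h2]
  rw [div_mul_eq_mul_div, le_div_iff₀ (by positivity : (0:ℝ) < lam^2)]
  nlinarith [h3]

lemma bound_b (R ε kmin kmax k c p r : ℝ) (hR : 0 < R) (hε : 0 < ε) (hk : 0 < kmin)
    (h1 : kmin ≤ k) (h2 : k ≤ kmax) (hc : |c| ≤ R) (hp : |p| ≤ R) (hr : |r| ≤ R) :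
    |c + (2*k/ε)*p*(p-r) + (1/ε^2)*(p-r)^2 - 2*Real.sqrt k*p - (p-r)/(ε*Real.sqrt k)|
      ≤ R + (2*kmax/ε)*(2*R^2) + (1/ε^2)*(4*R^2) + 2*Real.sqrt kmax*R
        + (2*R)/(ε*Real.sqrt kmin) := by
  have hk0 : 0 < k := lt_of_lt_of_le hk h1
  have hkmax0 : 0 < kmax := lt_of_lt_of_le hk0 h2
  have hsk : 0 < Real.sqrt k := Real.sqrt_pos.mpr hk0
  have hskmin : 0 < Real.sqrt kmin := Real.sqrt_pos.mpr hk
  have hsle : Real.sqrt kmin ≤ Real.sqrt k := Real.sqrt_le_sqrt h1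
  have hsle2 : Real.sqrt k ≤ Real.sqrt kmax := Real.sqrt_le_sqrt h2
  have hpr : |p - r| ≤ 2*R := (abs_sub' p r).trans (by linarith)
  have hdiv : 2*k/ε ≤ 2*kmax/ε := by gcongr <;> linarith
  have hT1 : |(2*k/ε)*p*(p-r)| ≤ (2*kmax/ε)*(2*R^2) := by
    rw [abs_mul, abs_mul, abs_of_nonneg (by positivity : (0:ℝ) ≤ 2*k/ε)]
    calc 2*k/ε * |p| * |p-r| ≤ (2*kmax/ε) * R * (2*R) := by
          apply mul_le_mul (mul_le_mul hdiv hp (abs_nonneg _)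
            (div_nonneg (by linarith) hε.le)) hpr (abs_nonneg _)
          apply mul_nonneg (div_nonneg (by linarith) hε.le) hR.le
      _ = (2*kmax/ε)*(2*R^2) := by ring
  have hT2 : |(1/ε^2)*(p-r)^2| ≤ (1/ε^2)*(4*R^2) := by
    rw [abs_mul, abs_of_nonneg (by positivity : (0:ℝ) ≤ 1/ε^2),
      abs_of_nonneg (sq_nonneg (p-r))]
    have h4 : (p-r)^2 ≤ 4*R^2 := by nlinarith [abs_le.mp hpr]
    exact mul_le_mul_of_nonneg_left h4 (by positivity)
  have hT3 : |2*Real.sqrt k*p| ≤ 2*Real.sqrt kmax*R := by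
    rw [abs_mul, abs_of_nonneg (by positivity : (0:ℝ) ≤ 2*Real.sqrt k)]
    exact mul_le_mul (by linarith) hp (abs_nonneg _) (by positivity)
  have hT4 : |(p-r)/(ε*Real.sqrt k)| ≤ (2*R)/(ε*Real.sqrt kmin) := by
    rw [abs_div, abs_of_nonneg (by positivity : (0:ℝ) ≤ ε*Real.sqrt k)]
    gcongr
    all_goals first | exact mul_pos hε hskmin | linarith
  have s1 : |c + (2*k/ε)*p*(p-r) + (1/ε^2)*(p-r)^2 - 2*Real.sqrt k*p - (p-r)/(ε*Real.sqrt k)|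
      ≤ |c + (2*k/ε)*p*(p-r) + (1/ε^2)*(p-r)^2 - 2*Real.sqrt k*p| + |(p-r)/(ε*Real.sqrt k)| :=
    abs_sub' _ _
  have s2 : |c + (2*k/ε)*p*(p-r) + (1/ε^2)*(p-r)^2 - 2*Real.sqrt k*p|
      ≤ |c + (2*k/ε)*p*(p-r) + (1/ε^2)*(p-r)^2| + |2*Real.sqrt k*p| := abs_sub' _ _
  have s3 : |c + (2*k/ε)*p*(p-r) + (1/ε^2)*(p-r)^2|
      ≤ |c + (2*k/ε)*p*(p-r)| + |(1/ε^2)*(p-r)^2| := abs_add_le _ _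
  have s4 : |c + (2*k/ε)*p*(p-r)| ≤ |c| + |(2*k/ε)*p*(p-r)| := abs_add_le _ _
  linarith

lemma bound_G (R ε kmin kmax k p pr x w : ℝ) (hR : 0 < R) (hε : 0 < ε) (hk : 0 < kmin)
    (h1 : kmin ≤ k) (h2 : k ≤ kmax) (hp : |p| ≤ R) (hpr : |pr| ≤ 2*R)
    (hx : |x| ≤ 2*R) (hw : |w| ≤ 2*R) :
    |(2*k/ε)*(p*(x-w) + x*pr + x*(x-w)) + (1/ε^2)*(2*pr*(x-w) + (x-w)^2)
        - 2*Real.sqrt k*x - (x-w)/(ε*Real.sqrt k)|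
      ≤ ((2*kmax/ε)*(5*R) + (1/ε^2)*(8*R) + 2*Real.sqrt kmax + 1/(ε*Real.sqrt kmin))
          * (|x| + |w|) := by
  have hk0 : 0 < k := lt_of_lt_of_le hk h1
  have hkmax0 : 0 < kmax := lt_of_lt_of_le hk0 h2
  have hsk : 0 < Real.sqrt k := Real.sqrt_pos.mpr hk0
  have hskmin : 0 < Real.sqrt kmin := Real.sqrt_pos.mpr hk
  have hsle : Real.sqrt kmin ≤ Real.sqrt k := Real.sqrt_le_sqrt h1
  have hsle2 : Real.sqrt k ≤ Real.sqrt kmax := Real.sqrt_le_sqrt h2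
  have hxw : |x - w| ≤ |x| + |w| := abs_sub' x w
  have hxle : |x| ≤ |x| + |w| := by linarith [abs_nonneg w]
  have hdiv : 2*k/ε ≤ 2*kmax/ε := by gcongr <;> linarith
  have ha1 : |p*(x-w)| ≤ R*(|x|+|w|) := by
    rw [abs_mul]; exact mul_le_mul hp hxw (abs_nonneg _) hR.le
  have ha2 : |x*pr| ≤ (|x|+|w|)*(2*R) := by
    rw [abs_mul]; exact mul_le_mul hxle hpr (abs_nonneg _) (by positivity)
  have ha3 : |x*(x-w)| ≤ (2*R)*(|x|+|w|) := by
    rw [abs_mul]; exact mul_le_mul hx hxw (abs_nonneg _) (by positivity)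
  have hinner1 : |p*(x-w) + x*pr + x*(x-w)| ≤ 5*R*(|x|+|w|) := by
    calc |p*(x-w) + x*pr + x*(x-w)| ≤ |p*(x-w) + x*pr| + |x*(x-w)| := abs_add_le _ _
      _ ≤ |p*(x-w)| + |x*pr| + |x*(x-w)| := by linarith [abs_add_le (p*(x-w)) (x*pr)]
      _ ≤ 5*R*(|x|+|w|) := by nlinarith [ha1, ha2, ha3]
  have ha4 : |2*pr*(x-w)| ≤ 4*R*(|x|+|w|) := by
    have e1 : |2*pr*(x-w)| = 2 * (|pr| * |x-w|) := by
      rw [abs_mul, abs_mul, abs_two]; ring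
    rw [e1]
    nlinarith [mul_le_mul hpr hxw (abs_nonneg _) (by positivity : (0:ℝ) ≤ 2*R)]
  have ha5 : |(x-w)^2| ≤ 4*R*(|x|+|w|) := by
    rw [abs_of_nonneg (sq_nonneg _)]
    have h4R : |x - w| ≤ 4*R := by linarith
    have e1 : (x-w)^2 = |x-w| * |x-w| := by rw [← abs_mul, abs_of_nonneg (mul_self_nonneg _)]; ring
    rw [e1]
    calc |x-w| * |x-w| ≤ (4*R)*(|x|+|w|) := mul_le_mul h4R hxw (abs_nonneg _) (by positivity)
      _ = 4*R*(|x|+|w|) := by ring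
  have hinner2 : |2*pr*(x-w) + (x-w)^2| ≤ 8*R*(|x|+|w|) := by
    calc |2*pr*(x-w) + (x-w)^2| ≤ |2*pr*(x-w)| + |(x-w)^2| := abs_add_le _ _
      _ ≤ 8*R*(|x|+|w|) := by linarith
  have hT1 : |(2*k/ε)*(p*(x-w) + x*pr + x*(x-w))| ≤ ((2*kmax/ε)*(5*R))*(|x|+|w|) := by
    rw [abs_mul, abs_of_nonneg (by positivity : (0:ℝ) ≤ 2*k/ε)]
    calc 2*k/ε * |p*(x-w) + x*pr + x*(x-w)| ≤ (2*kmax/ε)*(5*R*(|x|+|w|)) := by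
          exact mul_le_mul hdiv hinner1 (abs_nonneg _)
            (div_nonneg (by linarith) hε.le)
      _ = ((2*kmax/ε)*(5*R))*(|x|+|w|) := by ring
  have hT2 : |(1/ε^2)*(2*pr*(x-w) + (x-w)^2)| ≤ ((1/ε^2)*(8*R))*(|x|+|w|) := by
    rw [abs_mul, abs_of_nonneg (by positivity : (0:ℝ) ≤ 1/ε^2)]
    calc (1/ε^2) * |2*pr*(x-w) + (x-w)^2| ≤ (1/ε^2)*(8*R*(|x|+|w|)) :=
          mul_le_mul_of_nonneg_left hinner2 (by positivity)
      _ = ((1/ε^2)*(8*R))*(|x|+|w|) := by ring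
  have hT3 : |2*Real.sqrt k*x| ≤ (2*Real.sqrt kmax)*(|x|+|w|) := by
    rw [abs_mul, abs_of_nonneg (by positivity : (0:ℝ) ≤ 2*Real.sqrt k)]
    exact mul_le_mul (by linarith) hxle (abs_nonneg _) (by positivity)
  have hT4 : |(x-w)/(ε*Real.sqrt k)| ≤ (1/(ε*Real.sqrt kmin))*(|x|+|w|) := by
    rw [abs_div, abs_of_nonneg (by positivity : (0:ℝ) ≤ ε*Real.sqrt k)]
    calc |x-w|/(ε*Real.sqrt k) ≤ (|x|+|w|)/(ε*Real.sqrt kmin) := by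
          gcongr
          all_goals first | exact mul_pos hε hskmin | linarith
      _ = (1/(ε*Real.sqrt kmin))*(|x|+|w|) := by ring
  have s1 := abs_sub' ((2*k/ε)*(p*(x-w) + x*pr + x*(x-w)) + (1/ε^2)*(2*pr*(x-w) + (x-w)^2)
      - 2*Real.sqrt k*x) ((x-w)/(ε*Real.sqrt k))
  have s2 := abs_sub' ((2*k/ε)*(p*(x-w) + x*pr + x*(x-w)) + (1/ε^2)*(2*pr*(x-w) + (x-w)^2))
      (2*Real.sqrt k*x)
  have s3 := abs_add_le ((2*k/ε)*(p*(x-w) + x*pr + x*(x-w))) ((1/ε^2)*(2*pr*(x-w) + (x-w)^2))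
  have hdist : ((2*kmax/ε)*(5*R) + (1/ε^2)*(8*R) + 2*Real.sqrt kmax + 1/(ε*Real.sqrt kmin))
      * (|x| + |w|)
      = ((2*kmax/ε)*(5*R))*(|x|+|w|) + ((1/ε^2)*(8*R))*(|x|+|w|)
        + (2*Real.sqrt kmax)*(|x|+|w|) + (1/(ε*Real.sqrt kmin))*(|x|+|w|) := by ring
  linarith

lemma bound_N (ε kmax k x w : ℝ) (hε : 0 < ε) (hk0 : 0 ≤ k) (h2 : k ≤ kmax) :
    |(2*k/ε)*(x*(x-w)) + (1/ε^2)*(x-w)^2| ≤ (3*kmax/ε + 2/ε^2)*(x^2+w^2) := by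
  have h1 : |x*(x-w)| ≤ (3/2)*(x^2+w^2) := by
    rw [abs_mul]
    nlinarith [mul_le_mul_of_nonneg_left (abs_sub' x w) (abs_nonneg x), sq_abs x, sq_abs w,
      sq_nonneg (|x|-|w|), abs_nonneg x, abs_nonneg w]
  have h2' : (x-w)^2 ≤ 2*(x^2+w^2) := by nlinarith [sq_nonneg (x+w)]
  have e1 : |(2*k/ε)*(x*(x-w))| = (2*k/ε)*|x*(x-w)| := by
    rw [abs_mul, abs_of_nonneg (by positivity : (0:ℝ) ≤ 2*k/ε)]
  have e2 : |(1/ε^2)*(x-w)^2| = (1/ε^2)*(x-w)^2 := abs_of_nonneg (by positivity)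
  calc |(2*k/ε)*(x*(x-w)) + (1/ε^2)*(x-w)^2|
      ≤ |(2*k/ε)*(x*(x-w))| + |(1/ε^2)*(x-w)^2| := abs_add_le _ _
    _ = (2*k/ε)*|x*(x-w)| + (1/ε^2)*(x-w)^2 := by rw [e1, e2]
    _ ≤ (2*kmax/ε)*((3/2)*(x^2+w^2)) + (1/ε^2)*(2*(x^2+w^2)) := by
        apply add_le_add
        · exact mul_le_mul (by gcongr <;> linarith) h1 (abs_nonneg _)
            (div_nonneg (by linarith) hε.le)
        · exact mul_le_mul_of_nonneg_left h2' (by positivity)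
    _ = (3*kmax/ε + 2/ε^2)*(x^2+w^2) := by ring


lemma cd2 (f : ℝ → ℝ) (h : ContDiff ℝ 2 f) :
    Differentiable ℝ f ∧ Continuous (deriv f) ∧ Differentiable ℝ (deriv f) ∧
      Continuous (deriv (deriv f)) := by
  have h2 : ContDiff ℝ ((1:ℕ)+1) f := by exact_mod_cast h
  have hd := (contDiff_succ_iff_deriv.mp h2)
  have h1 : ContDiff ℝ ((0:ℕ)+1) (deriv f) := by exact_mod_cast hd.2.2
  have hdd := contDiff_succ_iff_deriv.mp h1
  exact ⟨hd.1, hd.2.2.continuous, hdd.1, hdd.2.2.continuous⟩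
/-- Global strong convexity of the convexified functional `J_λ` (item 2 of Theorem 5.1). -/
theorem strong_convexity_of_J (Z R ε kmin kmax : ℝ) (hZ : 0 < Z) (hR : 0 < R)
    (hε : ε ∈ Set.Ioo (0:ℝ) 1) (hkmin : 0 < kmin) (hkk : kmin ≤ kmax) :
    ∃ lam₁ C₁ : ℝ, 1 ≤ lam₁ ∧ 0 < C₁ ∧
      ∀ lam : ℝ, lam₁ ≤ lam → ∀ k ∈ Set.Icc kmin kmax,
      ∀ q₁ r₁ q₂ r₂ : ℝ → ℝ,
      ContDiff ℝ 2 q₁ → ContDiff ℝ 2 r₁ → ContDiff ℝ 2 q₂ → ContDiff ℝ 2 r₂ →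
      (∀ z ∈ Set.Icc (0:ℝ) Z,
        |q₁ z| ≤ R ∧ |deriv q₁ z| ≤ R ∧ |deriv (deriv q₁) z| ≤ R ∧
        |r₁ z| ≤ R ∧ |deriv r₁ z| ≤ R ∧ |deriv (deriv r₁) z| ≤ R ∧
        |q₂ z| ≤ R ∧ |deriv q₂ z| ≤ R ∧ |deriv (deriv q₂) z| ≤ R ∧
        |r₂ z| ≤ R ∧ |deriv r₂ z| ≤ R ∧ |deriv (deriv r₂) z| ≤ R) →
      ∀ h₁ h₂ : ℝ → ℝ,
      h₁ = (fun z => q₂ z - q₁ z) → h₂ = (fun z => r₂ z - r₁ z) →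
      h₁ 0 = 0 → deriv h₁ 0 = 0 → h₂ 0 = 0 → deriv h₂ 0 = 0 →
      Jfun ε k lam Z q₂ r₂ - Jfun ε k lam Z q₁ r₁
        - 2 * ∫ z in (0:ℝ)..Z,
            (L1 ε k q₁ r₁ z * L1lin ε k q₁ r₁ h₁ h₂ z
              + L2 ε k q₁ r₁ z * L2lin ε k q₁ r₁ h₁ h₂ z) * Real.exp (-2 * lam * z)
      ≥ C₁ * Real.exp (-2 * lam * Z) *
          ∫ z in (0:ℝ)..Z,
            ((h₁ z) ^ 2 + (deriv h₁ z) ^ 2 + (deriv (deriv h₁) z) ^ 2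
              + (h₂ z) ^ 2 + (deriv h₂ z) ^ 2 + (deriv (deriv h₂) z) ^ 2) := by
  obtain ⟨hε0, hε1⟩ := hε
  have hkmax : 0 < kmax := lt_of_lt_of_le hkmin hkk
  have hskmin : 0 < Real.sqrt kmin := Real.sqrt_pos.mpr hkmin
  have hsKpos : 0 < Real.sqrt kmax := Real.sqrt_pos.mpr hkmax
  set M : ℝ := (2*kmax/ε)*(5*R) + (1/ε^2)*(8*R) + 2*Real.sqrt kmax + 1/(ε*Real.sqrt kmin)
    with hM
  set B : ℝ := R + (2*kmax/ε)*(2*R^2) + (1/ε^2)*(4*R^2) + 2*Real.sqrt kmax*R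
    + (2*R)/(ε*Real.sqrt kmin) with hB
  set CN : ℝ := 3*kmax/ε + 2/ε^2 with hCN
  set A : ℝ := 4*M^2 + 4*B*CN with hA
  have hMpos : 0 < M := by
    have t1 : 0 < (2*kmax/ε)*(5*R) := mul_pos (div_pos (by linarith) hε0) (by linarith)
    have t2 : 0 < (1/ε^2)*(8*R) := mul_pos (by positivity) (by linarith)
    have t4 : 0 < 1/(ε*Real.sqrt kmin) := by positivity
    rw [hM]; linarith
  have hBpos : 0 < B := by
    have t1 : 0 < (2*kmax/ε)*(2*R^2) := mul_pos (div_pos (by linarith) hε0) (by positivity)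
    have t2 : 0 < (1/ε^2)*(4*R^2) := mul_pos (by positivity) (by positivity)
    have t3 : 0 < 2*Real.sqrt kmax*R := by positivity
    have t4 : 0 < (2*R)/(ε*Real.sqrt kmin) := by positivity
    rw [hB]; linarith
  have hCNpos : 0 < CN := by
    have t1 : 0 < 3*kmax/ε := div_pos (by linarith) hε0
    have t2 : 0 < 2/ε^2 := by positivity
    rw [hCN]; linarith
  have hApos : 0 < A := by
    rw [hA]; nlinarith [mul_pos hBpos hCNpos, sq_nonneg M, mul_pos hMpos hMpos]
  clear_value M B CN A
  refine ⟨1 + 2*Real.sqrt A, 1/12, by nlinarith [Real.sqrt_nonneg A], by norm_num, ?_⟩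
  intro lam hlam k hk q₁ r₁ q₂ r₂ hq₁ hr₁ hq₂ hr₂ hbd h₁ h₂ hh1 hh2 h10 h1'0 h20 h2'0
  obtain ⟨hq₁d, hq₁'c, hq₁'d, hq₁''c⟩ := cd2 q₁ hq₁
  obtain ⟨hr₁d, hr₁'c, hr₁'d, hr₁''c⟩ := cd2 r₁ hr₁
  obtain ⟨hq₂d, hq₂'c, hq₂'d, hq₂''c⟩ := cd2 q₂ hq₂
  obtain ⟨hr₂d, hr₂'c, hr₂'d, hr₂''c⟩ := cd2 r₂ hr₂
  have hh₁cd : ContDiff ℝ 2 h₁ := by rw [hh1]; exact hq₂.sub hq₁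
  have hh₂cd : ContDiff ℝ 2 h₂ := by rw [hh2]; exact hr₂.sub hr₁
  obtain ⟨hh1d, hh1'c, hh1'd, hh1''c⟩ := cd2 h₁ hh₁cd
  obtain ⟨hh2d, hh2'c, hh2'd, hh2''c⟩ := cd2 h₂ hh₂cd
  have hlam1 : 1 ≤ lam := le_trans (by nlinarith only [Real.sqrt_nonneg A]) hlam
  have hlam0 : 0 < lam := lt_of_lt_of_le one_pos hlam1
  have hlamsq : 4*A ≤ lam^2 := by
    have h1 : 2*Real.sqrt A ≤ lam := by nlinarith only [hlam, Real.sqrt_nonneg A]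
    nlinarith only [Real.sq_sqrt hApos.le, Real.sqrt_nonneg A, h1, hlam1]
  -- derivative identities
  have hd1 : ∀ z, deriv q₂ z = deriv q₁ z + deriv h₁ z := by
    intro z
    rw [hh1, deriv_fun_sub (hq₂d z) (hq₁d z)]
    ring
  have hder1 : deriv h₁ = fun z => deriv q₂ z - deriv q₁ z := by
    funext z; rw [hh1, deriv_fun_sub (hq₂d z) (hq₁d z)]
  have hdd1 : ∀ z, deriv (deriv q₂) z = deriv (deriv q₁) z + deriv (deriv h₁) z := by
    intro z
    rw [hder1, deriv_fun_sub (hq₂'d z) (hq₁'d z)]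
    ring
  have hd2 : ∀ z, deriv r₂ z = deriv r₁ z + deriv h₂ z := by
    intro z
    rw [hh2, deriv_fun_sub (hr₂d z) (hr₁d z)]
    ring
  have hder2 : deriv h₂ = fun z => deriv r₂ z - deriv r₁ z := by
    funext z; rw [hh2, deriv_fun_sub (hr₂d z) (hr₁d z)]
  have hdd2 : ∀ z, deriv (deriv r₂) z = deriv (deriv r₁) z + deriv (deriv h₂) z := by
    intro z
    rw [hder2, deriv_fun_sub (hr₂'d z) (hr₁'d z)]
    ring
  -- continuity
  have hcL1a : Continuous (fun z => L1 ε k q₁ r₁ z) := by unfold L1; fun_prop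
  have hcL2a : Continuous (fun z => L2 ε k q₁ r₁ z) := by unfold L2; fun_prop
  have hcL1b : Continuous (fun z => L1 ε k q₂ r₂ z) := by unfold L1; fun_prop
  have hcL2b : Continuous (fun z => L2 ε k q₂ r₂ z) := by unfold L2; fun_prop
  have hcL1lin : Continuous (fun z => L1lin ε k q₁ r₁ h₁ h₂ z) := by unfold L1lin; fun_prop
  have hcL2lin : Continuous (fun z => L2lin ε k q₁ r₁ h₁ h₂ z) := by unfold L2lin; fun_prop
  have hce : Continuous (fun z : ℝ => Real.exp (-2*lam*z)) := by fun_prop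
  -- the quadratic remainder and the first-order difference
  set Gf : ℝ → ℝ := fun z => L1 ε k q₂ r₂ z - L1 ε k q₁ r₁ z - deriv (deriv h₁) z with hGf
  set Nf : ℝ → ℝ := fun z => L1 ε k q₂ r₂ z - L1 ε k q₁ r₁ z - L1lin ε k q₁ r₁ h₁ h₂ z
    with hNf
  clear_value Gf Nf
  have hGform : ∀ z, Gf z =
      (2*k/ε)*(deriv q₁ z*(deriv h₁ z - deriv h₂ z)
        + deriv h₁ z*(deriv q₁ z - deriv r₁ z) + deriv h₁ z*(deriv h₁ z - deriv h₂ z))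
      + (1/ε^2)*(2*(deriv q₁ z - deriv r₁ z)*(deriv h₁ z - deriv h₂ z)
        + (deriv h₁ z - deriv h₂ z)^2)
      - 2*Real.sqrt k*deriv h₁ z - (deriv h₁ z - deriv h₂ z)/(ε*Real.sqrt k) := by
    intro z
    simp only [hGf, L1]
    rw [hd1 z, hd2 z, hdd1 z]
    ring
  have hGid1 : ∀ z, L1 ε k q₂ r₂ z - L1 ε k q₁ r₁ z = deriv (deriv h₁) z + Gf z := by
    intro z; simp only [hGf]; ring
  have hGid2 : ∀ z, L2 ε k q₂ r₂ z - L2 ε k q₁ r₁ z = deriv (deriv h₂) z + Gf z := by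
    intro z
    rw [hGform z]
    simp only [L2]
    rw [hd1 z, hd2 z, hdd2 z]
    ring
  have hNform : ∀ z, Nf z = (2*k/ε)*(deriv h₁ z*(deriv h₁ z - deriv h₂ z))
      + (1/ε^2)*(deriv h₁ z - deriv h₂ z)^2 := by
    intro z
    simp only [hNf, L1, L1lin]
    rw [hd1 z, hd2 z, hdd1 z]
    ring
  have hNid1 : ∀ z, L1 ε k q₂ r₂ z - L1 ε k q₁ r₁ z - L1lin ε k q₁ r₁ h₁ h₂ z = Nf z := by
    intro z; simp only [hNf]
  have hNid2 : ∀ z, L2 ε k q₂ r₂ z - L2 ε k q₁ r₁ z - L2lin ε k q₁ r₁ h₁ h₂ z = Nf z := by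
    intro z
    rw [hNform z]
    simp only [L2, L2lin]
    rw [hd1 z, hd2 z, hdd2 z]
    ring
  -- continuity of Gf, Nf
  have hcGf : Continuous Gf := by
    rw [hGf]; exact (hcL1b.sub hcL1a).sub hh1''c
  have hcNf : Continuous Nf := by
    rw [hNf]; exact (hcL1b.sub hcL1a).sub hcL1lin
  -- integrands
  set Df : ℝ → ℝ := fun z =>
    ((deriv (deriv h₁) z + Gf z)^2 + (deriv (deriv h₂) z + Gf z)^2
      + 2*(L1 ε k q₁ r₁ z + L2 ε k q₁ r₁ z)*Nf z) * Real.exp (-2*lam*z) with hDf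
  set Ql : ℝ → ℝ := fun z =>
    ((1/2)*(deriv (deriv h₁) z)^2 + (1/2)*(deriv (deriv h₂) z)^2
      - A*((deriv h₁ z)^2 + (deriv h₂ z)^2)) * Real.exp (-2*lam*z) with hQl
  clear_value Df Ql
  -- integrability facts
  have hiP1 : IntervalIntegrable
      (fun z => ((L1 ε k q₁ r₁ z) ^ 2 + (L2 ε k q₁ r₁ z) ^ 2) * Real.exp (-2 * lam * z))
      MeasureTheory.volume 0 Z :=
    (((hcL1a.pow 2).add (hcL2a.pow 2)).mul hce).intervalIntegrable _ _
  have hiP2 : IntervalIntegrable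
      (fun z => ((L1 ε k q₂ r₂ z) ^ 2 + (L2 ε k q₂ r₂ z) ^ 2) * Real.exp (-2 * lam * z))
      MeasureTheory.volume 0 Z :=
    (((hcL1b.pow 2).add (hcL2b.pow 2)).mul hce).intervalIntegrable _ _
  have hiP3 : IntervalIntegrable
      (fun z => (L1 ε k q₁ r₁ z * L1lin ε k q₁ r₁ h₁ h₂ z
        + L2 ε k q₁ r₁ z * L2lin ε k q₁ r₁ h₁ h₂ z) * Real.exp (-2 * lam * z))
      MeasureTheory.volume 0 Z :=
    (((hcL1a.mul hcL1lin).add (hcL2a.mul hcL2lin)).mul hce).intervalIntegrable _ _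
  have hiDf : IntervalIntegrable Df MeasureTheory.volume 0 Z := by
    apply Continuous.intervalIntegrable
    rw [hDf]
    exact ((((hh1''c.add hcGf).pow 2).add ((hh2''c.add hcGf).pow 2)).add
      ((continuous_const.mul (hcL1a.add hcL2a)).mul hcNf)).mul hce
  have hiQl : IntervalIntegrable Ql MeasureTheory.volume 0 Z := by
    apply Continuous.intervalIntegrable
    rw [hQl]
    exact (((continuous_const.mul (hh1''c.pow 2)).add
      (continuous_const.mul (hh2''c.pow 2))).sub
      (continuous_const.mul ((hh1'c.pow 2).add (hh2'c.pow 2)))).mul hce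
  have hiu' : IntervalIntegrable (fun z => (deriv (deriv h₁) z)^2 * Real.exp (-2*lam*z))
      MeasureTheory.volume 0 Z := ((hh1''c.pow 2).mul hce).intervalIntegrable _ _
  have hiv' : IntervalIntegrable (fun z => (deriv (deriv h₂) z)^2 * Real.exp (-2*lam*z))
      MeasureTheory.volume 0 Z := ((hh2''c.pow 2).mul hce).intervalIntegrable _ _
  have hiu : IntervalIntegrable (fun z => (deriv h₁ z)^2 * Real.exp (-2*lam*z))
      MeasureTheory.volume 0 Z := ((hh1'c.pow 2).mul hce).intervalIntegrable _ _
  have hiv : IntervalIntegrable (fun z => (deriv h₂ z)^2 * Real.exp (-2*lam*z))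
      MeasureTheory.volume 0 Z := ((hh2'c.pow 2).mul hce).intervalIntegrable _ _
  have hih1 : IntervalIntegrable (fun z => (h₁ z)^2 * Real.exp (-2*lam*z))
      MeasureTheory.volume 0 Z :=
    (((hh1d.continuous.pow 2)).mul hce).intervalIntegrable _ _
  have hih2 : IntervalIntegrable (fun z => (h₂ z)^2 * Real.exp (-2*lam*z))
      MeasureTheory.volume 0 Z :=
    (((hh2d.continuous.pow 2)).mul hce).intervalIntegrable _ _
  -- the key integral identity
  have hJ : Jfun ε k lam Z q₂ r₂ - Jfun ε k lam Z q₁ r₁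
      - 2 * ∫ z in (0:ℝ)..Z,
          (L1 ε k q₁ r₁ z * L1lin ε k q₁ r₁ h₁ h₂ z
            + L2 ε k q₁ r₁ z * L2lin ε k q₁ r₁ h₁ h₂ z) * Real.exp (-2 * lam * z)
      = ∫ z in (0:ℝ)..Z, Df z := by
    have s1 : ∫ z in (0:ℝ)..Z,
        (((L1 ε k q₂ r₂ z) ^ 2 + (L2 ε k q₂ r₂ z) ^ 2) * Real.exp (-2 * lam * z)
          - ((L1 ε k q₁ r₁ z) ^ 2 + (L2 ε k q₁ r₁ z) ^ 2) * Real.exp (-2 * lam * z)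
          - 2 * ((L1 ε k q₁ r₁ z * L1lin ε k q₁ r₁ h₁ h₂ z
            + L2 ε k q₁ r₁ z * L2lin ε k q₁ r₁ h₁ h₂ z) * Real.exp (-2 * lam * z)))
        = Jfun ε k lam Z q₂ r₂ - Jfun ε k lam Z q₁ r₁
          - 2 * ∫ z in (0:ℝ)..Z,
            (L1 ε k q₁ r₁ z * L1lin ε k q₁ r₁ h₁ h₂ z
              + L2 ε k q₁ r₁ z * L2lin ε k q₁ r₁ h₁ h₂ z) * Real.exp (-2 * lam * z) := by
      rw [intervalIntegral.integral_sub (hiP2.sub hiP1) (hiP3.const_mul 2),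
        intervalIntegral.integral_sub hiP2 hiP1, intervalIntegral.integral_const_mul]
      simp only [Jfun]
    rw [← s1]
    apply intervalIntegral.integral_congr
    intro z _
    have e1 := hNid1 z
    have e2 := hNid2 z
    have e3 := hGid1 z
    have e4 := hGid2 z
    simp only [hDf]
    rw [← e3, ← e4,
      show L1lin ε k q₁ r₁ h₁ h₂ z = L1 ε k q₂ r₂ z - L1 ε k q₁ r₁ z - Nf z by linarith only [e1],
      show L2lin ε k q₁ r₁ h₁ h₂ z = L2 ε k q₂ r₂ z - L2 ε k q₁ r₁ z - Nf z by linarith only [e2]]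
    ring
  -- pointwise lower bound and monotonicity
  have hmono : ∫ z in (0:ℝ)..Z, Ql z ≤ ∫ z in (0:ℝ)..Z, Df z := by
    apply intervalIntegral.integral_mono_on hZ.le hiQl hiDf
    intro z hz
    obtain ⟨b1, b2, b3, b4, b5, b6, b7, b8, b9, b10, b11, b12⟩ := hbd z hz
    have hx : |deriv h₁ z| ≤ 2*R := by
      rw [show deriv h₁ z = deriv q₂ z - deriv q₁ z by linarith only [hd1 z]]
      exact (abs_sub' _ _).trans (by linarith only [b2, b8])
    have hw : |deriv h₂ z| ≤ 2*R := by
      rw [show deriv h₂ z = deriv r₂ z - deriv r₁ z by linarith only [hd2 z]]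
      exact (abs_sub' _ _).trans (by linarith only [b5, b11])
    have hGb : |Gf z| ≤ M * (|deriv h₁ z| + |deriv h₂ z|) := by
      rw [hGform z, hM]
      exact bound_G R ε kmin kmax k _ _ _ _ hR hε0 hkmin hk.1 hk.2 b2
        ((abs_sub' _ _).trans (by linarith only [b2, b5])) hx hw
    have hNb : |Nf z| ≤ CN * ((deriv h₁ z)^2 + (deriv h₂ z)^2) := by
      rw [hNform z, hCN]
      exact bound_N ε kmax k _ _ hε0 (by linarith only [hk.1, hkmin]) hk.2
    have hb1 : |L1 ε k q₁ r₁ z| ≤ B := by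
      rw [hB]; simp only [L1]
      exact bound_b R ε kmin kmax k _ _ _ hR hε0 hkmin hk.1 hk.2 b3 b2 b5
    have hb2 : |L2 ε k q₁ r₁ z| ≤ B := by
      rw [hB]; simp only [L2]
      exact bound_b R ε kmin kmax k _ _ _ hR hε0 hkmin hk.1 hk.2 b6 b2 b5
    have habs2 : (Gf z)^2 ≤ (M*(|deriv h₁ z| + |deriv h₂ z|))^2 := by
      rw [← sq_abs (Gf z)]
      exact pow_le_pow_left₀ (abs_nonneg _) hGb 2
    have hxy : (|deriv h₁ z| + |deriv h₂ z|)^2 ≤ 2*((deriv h₁ z)^2 + (deriv h₂ z)^2) := by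
      nlinarith only [sq_nonneg (|deriv h₁ z| - |deriv h₂ z|), sq_abs (deriv h₁ z),
        sq_abs (deriv h₂ z)]
    have hg2 : (Gf z)^2 ≤ 2*M^2*((deriv h₁ z)^2 + (deriv h₂ z)^2) := by
      calc (Gf z)^2 ≤ (M*(|deriv h₁ z| + |deriv h₂ z|))^2 := habs2
        _ = M^2*(|deriv h₁ z| + |deriv h₂ z|)^2 := by ring
        _ ≤ M^2*(2*((deriv h₁ z)^2 + (deriv h₂ z)^2)) :=
            mul_le_mul_of_nonneg_left hxy (sq_nonneg M)
        _ = 2*M^2*((deriv h₁ z)^2 + (deriv h₂ z)^2) := by ring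
    have hbn : -(4*B*CN*((deriv h₁ z)^2 + (deriv h₂ z)^2))
        ≤ 2*(L1 ε k q₁ r₁ z + L2 ε k q₁ r₁ z)*Nf z := by
      have habs : |(L1 ε k q₁ r₁ z + L2 ε k q₁ r₁ z) * Nf z|
          ≤ (2*B)*(CN*((deriv h₁ z)^2 + (deriv h₂ z)^2)) := by
        rw [abs_mul]
        exact mul_le_mul ((abs_add_le _ _).trans (by linarith only [hb1, hb2])) hNb
          (abs_nonneg _) (by linarith only [hBpos])
      have hneg := neg_abs_le ((L1 ε k q₁ r₁ z + L2 ε k q₁ r₁ z) * Nf z)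
      nlinarith only [habs, hneg]
    have hsq1 : (1/2)*(deriv (deriv h₁) z)^2 - (Gf z)^2 ≤ (deriv (deriv h₁) z + Gf z)^2 := by
      nlinarith only [sq_nonneg (deriv (deriv h₁) z + 2*Gf z)]
    have hsq2 : (1/2)*(deriv (deriv h₂) z)^2 - (Gf z)^2 ≤ (deriv (deriv h₂) z + Gf z)^2 := by
      nlinarith only [sq_nonneg (deriv (deriv h₂) z + 2*Gf z)]
    simp only [hQl, hDf]
    apply mul_le_mul_of_nonneg_right _ (Real.exp_nonneg (-2*lam*z))
    rw [hA]
    linarith only [hsq1, hsq2, hg2, hbn]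
  -- splitting the lower-bound integral
  have hsplitQ : ∫ z in (0:ℝ)..Z, Ql z
      = (1/2)*(∫ z in (0:ℝ)..Z, (deriv (deriv h₁) z)^2 * Real.exp (-2*lam*z))
        + (1/2)*(∫ z in (0:ℝ)..Z, (deriv (deriv h₂) z)^2 * Real.exp (-2*lam*z))
        - A*((∫ z in (0:ℝ)..Z, (deriv h₁ z)^2 * Real.exp (-2*lam*z))
          + (∫ z in (0:ℝ)..Z, (deriv h₂ z)^2 * Real.exp (-2*lam*z))) := by
    have hQeq : Ql = fun z =>
        (1/2)*((deriv (deriv h₁) z)^2 * Real.exp (-2*lam*z))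
        + (1/2)*((deriv (deriv h₂) z)^2 * Real.exp (-2*lam*z))
        - A*((deriv h₁ z)^2 * Real.exp (-2*lam*z) + (deriv h₂ z)^2 * Real.exp (-2*lam*z)) := by
      funext z; simp only [hQl]; ring
    rw [hQeq,
      intervalIntegral.integral_sub ((hiu'.const_mul _).add (hiv'.const_mul _))
        ((hiu.add hiv).const_mul _),
      intervalIntegral.integral_add (hiu'.const_mul _) (hiv'.const_mul _),
      intervalIntegral.integral_const_mul, intervalIntegral.integral_const_mul,
      intervalIntegral.integral_const_mul, intervalIntegral.integral_add hiu hiv]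
  -- Poincaré estimates
  have hPu : ∫ z in (0:ℝ)..Z, (deriv h₁ z)^2 * Real.exp (-2*lam*z)
      ≤ (1/lam^2) * ∫ z in (0:ℝ)..Z, (deriv (deriv h₁) z)^2 * Real.exp (-2*lam*z) :=
    weighted_poincare Z lam hZ.le hlam1 (deriv h₁) hh1'd hh1''c h1'0
  have hPv : ∫ z in (0:ℝ)..Z, (deriv h₂ z)^2 * Real.exp (-2*lam*z)
      ≤ (1/lam^2) * ∫ z in (0:ℝ)..Z, (deriv (deriv h₂) z)^2 * Real.exp (-2*lam*z) :=
    weighted_poincare Z lam hZ.le hlam1 (deriv h₂) hh2'd hh2''c h2'0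
  have hPh1 : ∫ z in (0:ℝ)..Z, (h₁ z)^2 * Real.exp (-2*lam*z)
      ≤ (1/lam^2) * ∫ z in (0:ℝ)..Z, (deriv h₁ z)^2 * Real.exp (-2*lam*z) :=
    weighted_poincare Z lam hZ.le hlam1 h₁ hh1d hh1'c h10
  have hPh2 : ∫ z in (0:ℝ)..Z, (h₂ z)^2 * Real.exp (-2*lam*z)
      ≤ (1/lam^2) * ∫ z in (0:ℝ)..Z, (deriv h₂ z)^2 * Real.exp (-2*lam*z) :=
    weighted_poincare Z lam hZ.le hlam1 h₂ hh2d hh2'c h20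
  -- abbreviations
  set Iu' := ∫ z in (0:ℝ)..Z, (deriv (deriv h₁) z)^2 * Real.exp (-2*lam*z) with hIu'
  set Iv' := ∫ z in (0:ℝ)..Z, (deriv (deriv h₂) z)^2 * Real.exp (-2*lam*z) with hIv'
  set Iu := ∫ z in (0:ℝ)..Z, (deriv h₁ z)^2 * Real.exp (-2*lam*z) with hIu
  set Iv := ∫ z in (0:ℝ)..Z, (deriv h₂ z)^2 * Real.exp (-2*lam*z) with hIv
  set Ih1 := ∫ z in (0:ℝ)..Z, (h₁ z)^2 * Real.exp (-2*lam*z) with hIh1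
  set Ih2 := ∫ z in (0:ℝ)..Z, (h₂ z)^2 * Real.exp (-2*lam*z) with hIh2
  clear_value Iu' Iv' Iu Iv Ih1 Ih2
  have hIu'nn : 0 ≤ Iu' := by
    rw [hIu']; exact intervalIntegral.integral_nonneg hZ.le (fun z _ => by positivity)
  have hIv'nn : 0 ≤ Iv' := by
    rw [hIv']; exact intervalIntegral.integral_nonneg hZ.le (fun z _ => by positivity)
  have hIunn : 0 ≤ Iu := by
    rw [hIu]; exact intervalIntegral.integral_nonneg hZ.le (fun z _ => by positivity)
  have hIvnn : 0 ≤ Iv := by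
    rw [hIv]; exact intervalIntegral.integral_nonneg hZ.le (fun z _ => by positivity)
  -- bound on the right-hand side integral
  have hfrac : (1:ℝ)/lam^2 ≤ 1 := by
    rw [div_le_one (by positivity)]
    nlinarith only [hlam1]
  have hIuIu' : Iu ≤ Iu' := le_trans hPu (by nlinarith only [hIu'nn, hfrac])
  have hIvIv' : Iv ≤ Iv' := le_trans hPv (by nlinarith only [hIv'nn, hfrac])
  have hIh1Iu : Ih1 ≤ Iu := le_trans hPh1 (by nlinarith only [hIunn, hfrac])
  have hIh2Iv : Ih2 ≤ Iv := le_trans hPh2 (by nlinarith only [hIvnn, hfrac])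
  have hRHS : Real.exp (-2 * lam * Z) *
      (∫ z in (0:ℝ)..Z,
        ((h₁ z) ^ 2 + (deriv h₁ z) ^ 2 + (deriv (deriv h₁) z) ^ 2
          + (h₂ z) ^ 2 + (deriv h₂ z) ^ 2 + (deriv (deriv h₂) z) ^ 2))
      ≤ 3*(Iu' + Iv') := by
    have hS1 : Real.exp (-2 * lam * Z) *
        (∫ z in (0:ℝ)..Z,
          ((h₁ z) ^ 2 + (deriv h₁ z) ^ 2 + (deriv (deriv h₁) z) ^ 2
            + (h₂ z) ^ 2 + (deriv h₂ z) ^ 2 + (deriv (deriv h₂) z) ^ 2))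
        = ∫ z in (0:ℝ)..Z, Real.exp (-2 * lam * Z) *
          ((h₁ z) ^ 2 + (deriv h₁ z) ^ 2 + (deriv (deriv h₁) z) ^ 2
            + (h₂ z) ^ 2 + (deriv h₂ z) ^ 2 + (deriv (deriv h₂) z) ^ 2) :=
      (intervalIntegral.integral_const_mul _ _).symm
    have hcS : Continuous (fun z =>
        (h₁ z) ^ 2 + (deriv h₁ z) ^ 2 + (deriv (deriv h₁) z) ^ 2
          + (h₂ z) ^ 2 + (deriv h₂ z) ^ 2 + (deriv (deriv h₂) z) ^ 2) := by
      have c1 := hh1d.continuous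
      have c2 := hh2d.continuous
      fun_prop
    have hS2 : ∫ z in (0:ℝ)..Z, Real.exp (-2 * lam * Z) *
        ((h₁ z) ^ 2 + (deriv h₁ z) ^ 2 + (deriv (deriv h₁) z) ^ 2
          + (h₂ z) ^ 2 + (deriv h₂ z) ^ 2 + (deriv (deriv h₂) z) ^ 2)
        ≤ ∫ z in (0:ℝ)..Z,
          ((h₁ z) ^ 2 + (deriv h₁ z) ^ 2 + (deriv (deriv h₁) z) ^ 2
            + (h₂ z) ^ 2 + (deriv h₂ z) ^ 2 + (deriv (deriv h₂) z) ^ 2)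
            * Real.exp (-2*lam*z) := by
      apply intervalIntegral.integral_mono_on hZ.le
        ((continuous_const.mul hcS).intervalIntegrable _ _)
        ((hcS.mul hce).intervalIntegrable _ _)
      intro z hz
      have h1 : Real.exp (-2*lam*Z) ≤ Real.exp (-2*lam*z) :=
        Real.exp_le_exp.mpr (by nlinarith only [hz.2, hlam0])
      have h2 : (0:ℝ) ≤ (h₁ z) ^ 2 + (deriv h₁ z) ^ 2 + (deriv (deriv h₁) z) ^ 2
          + (h₂ z) ^ 2 + (deriv h₂ z) ^ 2 + (deriv (deriv h₂) z) ^ 2 := by positivity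
      calc Real.exp (-2*lam*Z) *
          ((h₁ z) ^ 2 + (deriv h₁ z) ^ 2 + (deriv (deriv h₁) z) ^ 2
            + (h₂ z) ^ 2 + (deriv h₂ z) ^ 2 + (deriv (deriv h₂) z) ^ 2)
          ≤ Real.exp (-2*lam*z) *
            ((h₁ z) ^ 2 + (deriv h₁ z) ^ 2 + (deriv (deriv h₁) z) ^ 2
              + (h₂ z) ^ 2 + (deriv h₂ z) ^ 2 + (deriv (deriv h₂) z) ^ 2) :=
            mul_le_mul_of_nonneg_right h1 h2
        _ = ((h₁ z) ^ 2 + (deriv h₁ z) ^ 2 + (deriv (deriv h₁) z) ^ 2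
              + (h₂ z) ^ 2 + (deriv h₂ z) ^ 2 + (deriv (deriv h₂) z) ^ 2)
              * Real.exp (-2*lam*z) := mul_comm _ _
    have hS3 : ∫ z in (0:ℝ)..Z,
        ((h₁ z) ^ 2 + (deriv h₁ z) ^ 2 + (deriv (deriv h₁) z) ^ 2
          + (h₂ z) ^ 2 + (deriv h₂ z) ^ 2 + (deriv (deriv h₂) z) ^ 2)
          * Real.exp (-2*lam*z)
        = Ih1 + Iu + Iu' + Ih2 + Iv + Iv' := by
      have e : (fun z => ((h₁ z) ^ 2 + (deriv h₁ z) ^ 2 + (deriv (deriv h₁) z) ^ 2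
          + (h₂ z) ^ 2 + (deriv h₂ z) ^ 2 + (deriv (deriv h₂) z) ^ 2)
          * Real.exp (-2*lam*z))
          = fun z => (h₁ z)^2 * Real.exp (-2*lam*z) + (deriv h₁ z)^2 * Real.exp (-2*lam*z)
            + (deriv (deriv h₁) z)^2 * Real.exp (-2*lam*z)
            + (h₂ z)^2 * Real.exp (-2*lam*z) + (deriv h₂ z)^2 * Real.exp (-2*lam*z)
            + (deriv (deriv h₂) z)^2 * Real.exp (-2*lam*z) := by
        funext z; ring
      rw [e, intervalIntegral.integral_add ((((hih1.add hiu).add hiu').add hih2).add hiv) hiv',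
        intervalIntegral.integral_add (((hih1.add hiu).add hiu').add hih2) hiv,
        intervalIntegral.integral_add ((hih1.add hiu).add hiu') hih2,
        intervalIntegral.integral_add (hih1.add hiu) hiu',
        intervalIntegral.integral_add hih1 hiu, hIh1, hIu, hIu', hIh2, hIv, hIv']
    rw [hS1]
    calc ∫ z in (0:ℝ)..Z, Real.exp (-2 * lam * Z) *
        ((h₁ z) ^ 2 + (deriv h₁ z) ^ 2 + (deriv (deriv h₁) z) ^ 2
          + (h₂ z) ^ 2 + (deriv h₂ z) ^ 2 + (deriv (deriv h₂) z) ^ 2)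
        ≤ Ih1 + Iu + Iu' + Ih2 + Iv + Iv' := by rw [← hS3]; exact hS2
      _ ≤ 3*(Iu' + Iv') := by
          linarith only [hIh1Iu, hIh2Iv, hIuIu', hIvIv', hIu'nn, hIv'nn, hIunn, hIvnn]
  -- final assembly
  rw [ge_iff_le, hJ]
  have hQlow : (1/4)*(Iu' + Iv') ≤ ∫ z in (0:ℝ)..Z, Ql z := by
    have h1 : Iu + Iv ≤ (1/lam^2)*Iu' + (1/lam^2)*Iv' := by linarith only [hPu, hPv]
    have h2 : A*(Iu+Iv) ≤ A*((1/lam^2)*Iu' + (1/lam^2)*Iv') :=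
      mul_le_mul_of_nonneg_left h1 hApos.le
    have h3 : A*((1/lam^2)*Iu' + (1/lam^2)*Iv') ≤ (1/4)*(Iu' + Iv') := by
      have hAl : A/lam^2 ≤ 1/4 := by
        rw [div_le_div_iff₀ (by positivity) (by norm_num)]
        linarith only [hlamsq]
      have he : A*((1/lam^2)*Iu' + (1/lam^2)*Iv') = (A/lam^2)*(Iu'+Iv') := by ring
      rw [he]
      exact mul_le_mul_of_nonneg_right hAl (by linarith only [hIu'nn, hIv'nn])
    linarith only [hsplitQ, h2, h3]
  calc (1/12) * Real.exp (-2 * lam * Z) *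
      (∫ z in (0:ℝ)..Z,
        ((h₁ z) ^ 2 + (deriv h₁ z) ^ 2 + (deriv (deriv h₁) z) ^ 2
          + (h₂ z) ^ 2 + (deriv h₂ z) ^ 2 + (deriv (deriv h₂) z) ^ 2))
      = (1/12) * (Real.exp (-2 * lam * Z) *
        (∫ z in (0:ℝ)..Z,
          ((h₁ z) ^ 2 + (deriv h₁ z) ^ 2 + (deriv (deriv h₁) z) ^ 2
            + (h₂ z) ^ 2 + (deriv h₂ z) ^ 2 + (deriv (deriv h₂) z) ^ 2))) := by ring
    _ ≤ (1/12) * (3*(Iu' + Iv')) := mul_le_mul_of_nonneg_left hRHS (by norm_num)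
    _ = (1/4)*(Iu' + Iv') := by ring
    _ ≤ ∫ z in (0:ℝ)..Z, Ql z := hQlow
    _ ≤ ∫ z in (0:ℝ)..Z, Df z := hmono
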